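/- For n ≥ 1 and g_n(t) = ∑_{k=1}^n (1 − k/n)(1/k) sin(kt), the derivative satisfies g_n'(t) = (1/2)F_n(t) − 1/2, where F_n(t) = ∑_{|k|≤n−1} (1 − |k|/n) e^{ikt} is the Fejér kernel. Consequently ∫_0^{2π} |g_n'(t)| dt ≤ 2π, i.e. the total variation of g_n on [0, 2π] is at most 2π. -/

import Mathlib

open Real Complex

/-- `g_n(t) = ∑_{k=1}^n (1 - k/n)(1/k) sin(kt)` (real valued). -/
noncomputable def gFun (n : ℕ) (t : ℝ) : ℝ :=
  ∑ k ∈ Finset.Icc 1 n, (1 - (k : ℝ) / n) * (1 / k) * Real.sin (k * t)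

/-- The Fejér kernel `F_n(t) = ∑_{|k| ≤ n-1} (1 - |k|/n) e^{ikt}` (real valued). -/
noncomputable def fejer (n : ℕ) (t : ℝ) : ℝ :=
  ∑ k ∈ Finset.Icc (-(n : ℤ) + 1) ((n : ℤ) - 1), (1 - |(k : ℝ)| / n) * Real.cos (k * t)

lemma key_regroup (f : ℤ → ℝ) (n : ℕ) :
    ∑ j ∈ Finset.range n, ∑ l ∈ Finset.range n, f ((j:ℤ) - l) =
    ∑ d ∈ Finset.Icc (-(n : ℤ) + 1) ((n : ℤ) - 1), ((n:ℝ) - |(d:ℝ)|) * f d := by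
  induction n with
  | zero => simp
  | succ n ih =>
    have h1 : ∑ j ∈ Finset.range (n+1), ∑ l ∈ Finset.range (n+1), f ((j:ℤ) - l)
        = (∑ j ∈ Finset.range n, ∑ l ∈ Finset.range n, f ((j:ℤ) - l))
          + (∑ j ∈ Finset.range n, f ((j:ℤ) - n))
          + ∑ l ∈ Finset.range (n+1), f ((n:ℤ) - l) := by
      rw [Finset.sum_range_succ]
      congr 1
      rw [← Finset.sum_add_distrib]
      refine Finset.sum_congr rfl fun j hj => ?_
      rw [Finset.sum_range_succ]
    have h2 : ∑ j ∈ Finset.range n, f ((j:ℤ) - n) = ∑ d ∈ Finset.Icc (-(n:ℤ)) (-1), f d := by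
      refine Finset.sum_nbij' (fun j => (j:ℤ) - n) (fun d => (d + n).toNat) ?_ ?_ ?_ ?_ ?_
      · intro j hj
        simp only [Finset.mem_range] at hj
        simp only [Finset.mem_Icc]
        omega
      · intro d hd
        simp only [Finset.mem_Icc] at hd
        simp only [Finset.mem_range]
        omega
      · intro j hj; simp only [Finset.mem_range] at hj; omega
      · intro d hd; simp only [Finset.mem_Icc] at hd; omega
      · intro j hj; rfl
    have h3 : ∑ l ∈ Finset.range (n+1), f ((n:ℤ) - l) = ∑ d ∈ Finset.Icc (0:ℤ) n, f d := by
      refine Finset.sum_nbij' (fun l => (n:ℤ) - l) (fun d => ((n:ℤ) - d).toNat) ?_ ?_ ?_ ?_ ?_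
      · intro l hl; simp only [Finset.mem_range] at hl; simp only [Finset.mem_Icc]; omega
      · intro d hd; simp only [Finset.mem_Icc] at hd; simp only [Finset.mem_range]; omega
      · intro l hl; simp only [Finset.mem_range] at hl; omega
      · intro d hd; simp only [Finset.mem_Icc] at hd; omega
      · intro l hl; rfl
    have h4 : Finset.Icc (-(n:ℤ)) (-1) ∪ Finset.Icc (0:ℤ) n = Finset.Icc (-(n:ℤ)) n := by
      ext x; simp only [Finset.mem_union, Finset.mem_Icc]; omega
    have hdisj : Disjoint (Finset.Icc (-(n:ℤ)) (-1)) (Finset.Icc (0:ℤ) n) := by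
      rw [Finset.disjoint_left]; intro x hx hx'
      simp only [Finset.mem_Icc] at hx hx'; omega
    have h5 : (∑ d ∈ Finset.Icc (-(n:ℤ)) (-1), f d) + ∑ d ∈ Finset.Icc (0:ℤ) n, f d
        = ∑ d ∈ Finset.Icc (-(n:ℤ)) n, f d := by
      rw [← Finset.sum_union hdisj, h4]
    have h6 : ∑ d ∈ Finset.Icc (-(n:ℤ)+1) ((n:ℤ)-1), ((n:ℝ) - |(d:ℝ)|) * f d
        = ∑ d ∈ Finset.Icc (-(n:ℤ)) n, ((n:ℝ) - |(d:ℝ)|) * f d := by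
      refine Finset.sum_subset ?_ ?_
      · intro x hx; simp only [Finset.mem_Icc] at hx ⊢; omega
      · intro x hx hx'
        simp only [Finset.mem_Icc] at hx hx'
        have : x = -(n:ℤ) ∨ x = n := by omega
        have hxa : |(x:ℝ)| = n := by
          rcases this with h | h <;> subst h <;> simp
        rw [hxa]; ring
    rw [h1, ih, h2, h3, add_assoc, h5, h6]
    have hb1 : (-((n:ℤ)+1) + 1) = -(n:ℤ) := by ring
    have hb2 : (((n:ℤ)+1) - 1) = (n:ℤ) := by ring
    push_cast [hb1, hb2]
    rw [← Finset.sum_add_distrib]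
    refine Finset.sum_congr rfl fun d hd => ?_
    ring

lemma fejer_eq_sq (n : ℕ) (hn : 1 ≤ n) (t : ℝ) :
    fejer n t = (1/(n:ℝ)) * ((∑ j ∈ Finset.range n, Real.cos (j * t))^2
      + (∑ j ∈ Finset.range n, Real.sin (j * t))^2) := by
  have hn' : (0:ℝ) < n := by exact_mod_cast hn
  have h := key_regroup (fun d => Real.cos (d * t)) n
  push_cast at h
  have hsq : (∑ j ∈ Finset.range n, ∑ l ∈ Finset.range n,
        Real.cos ((((j:ℤ) - (l:ℤ)) : ℝ) * t))
      = (∑ j ∈ Finset.range n, Real.cos (j * t))^2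
        + (∑ j ∈ Finset.range n, Real.sin (j * t))^2 := by
    have step : ∀ j l : ℕ, Real.cos ((((j:ℤ) - (l:ℤ)) : ℝ) * t)
        = Real.cos (j*t) * Real.cos (l*t) + Real.sin (j*t) * Real.sin (l*t) := by
      intro j l
      push_cast
      rw [sub_mul, Real.cos_sub]
    simp_rw [step, Finset.sum_add_distrib]
    rw [pow_two, pow_two, Finset.sum_mul_sum, Finset.sum_mul_sum]
  push_cast at hsq
  rw [hsq] at h
  rw [fejer, h, Finset.mul_sum]
  refine Finset.sum_congr rfl fun d hd => ?_
  field_simp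

lemma fejer_nonneg (n : ℕ) (hn : 1 ≤ n) (t : ℝ) : 0 ≤ fejer n t := by
  rw [fejer_eq_sq n hn t]
  have hn' : (0:ℝ) < n := by exact_mod_cast hn
  positivity

lemma fejer_integral (n : ℕ) (hn : 1 ≤ n) :
    ∫ t in (0:ℝ)..(2 * Real.pi), fejer n t = 2 * Real.pi := by
  unfold fejer
  rw [intervalIntegral.integral_finset_sum]
  · have : ∀ d ∈ Finset.Icc (-(n : ℤ) + 1) ((n : ℤ) - 1),
        (∫ t in (0:ℝ)..(2 * Real.pi), (1 - |(d : ℝ)| / n) * Real.cos (d * t))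
        = if d = 0 then 2 * Real.pi else 0 := by
      intro d hd
      rw [intervalIntegral.integral_const_mul]
      by_cases h0 : d = 0
      · subst h0; simp
      · have hd0 : (d:ℝ) ≠ 0 := Int.cast_ne_zero.mpr h0
        rw [if_neg h0]
        have : (∫ t in (0:ℝ)..(2 * Real.pi), Real.cos (d * t)) = 0 := by
          rw [intervalIntegral.integral_comp_mul_left Real.cos hd0, integral_cos]
          have h1 : Real.sin ((d:ℝ) * (2 * Real.pi)) = 0 := by
            have : (d:ℝ) * (2 * Real.pi) = (2 * d : ℤ) * Real.pi := by push_cast; ring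
            rw [this, Real.sin_int_mul_pi]
          simp [h1]
        rw [this, mul_zero]
    rw [Finset.sum_congr rfl this, Finset.sum_ite_eq' _ (0:ℤ)]
    have h0mem : (0:ℤ) ∈ Finset.Icc (-(n : ℤ) + 1) ((n : ℤ) - 1) := by
      simp only [Finset.mem_Icc]; omega
    rw [if_pos h0mem]
  · intro d hd
    exact (Continuous.intervalIntegrable (by continuity) _ _)

lemma fejer_split (n : ℕ) (hn : 1 ≤ n) (t : ℝ) :
    fejer n t = 1 + 2 * ∑ k ∈ Finset.Icc 1 n, (1 - (k : ℝ) / n) * Real.cos (k * t) := by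
  have hn' : (0:ℝ) < n := by exact_mod_cast hn
  set g : ℤ → ℝ := fun d => (1 - |(d : ℝ)| / n) * Real.cos (d * t) with hg
  have hsplit : Finset.Icc (-(n : ℤ) + 1) ((n : ℤ) - 1)
      = Finset.Icc (-(n:ℤ)+1) (-1) ∪ Finset.Icc (0:ℤ) ((n:ℤ)-1) := by
    ext x; simp only [Finset.mem_union, Finset.mem_Icc]; omega
  have hdisj : Disjoint (Finset.Icc (-(n:ℤ)+1) (-1)) (Finset.Icc (0:ℤ) ((n:ℤ)-1)) := by
    rw [Finset.disjoint_left]; intro x hx hx'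
    simp only [Finset.mem_Icc] at hx hx'; omega
  have hneg : ∑ d ∈ Finset.Icc (-(n:ℤ)+1) (-1), g d = ∑ d ∈ Finset.Icc (1:ℤ) ((n:ℤ)-1), g d := by
    refine Finset.sum_nbij' (fun d => -d) (fun d => -d) ?_ ?_ ?_ ?_ ?_
    · intro d hd; simp only [Finset.mem_Icc] at hd ⊢; omega
    · intro d hd; simp only [Finset.mem_Icc] at hd ⊢; omega
    · intro d _; omega
    · intro d _; omega
    · intro d _
      simp only [hg]
      push_cast
      rw [abs_neg, neg_mul, Real.cos_neg]
  have hzero : Finset.Icc (0:ℤ) ((n:ℤ)-1) = insert 0 (Finset.Icc (1:ℤ) ((n:ℤ)-1)) := by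
    ext x; simp only [Finset.mem_insert, Finset.mem_Icc]; omega
  have h0 : g 0 = 1 := by simp [hg]
  have hpos : ∑ d ∈ Finset.Icc (1:ℤ) ((n:ℤ)-1), g d
      = ∑ k ∈ Finset.Icc 1 n, (1 - (k : ℝ) / n) * Real.cos (k * t) := by
    have hsub : ∑ k ∈ Finset.Icc 1 n, (1 - (k : ℝ) / n) * Real.cos (k * t)
        = ∑ k ∈ Finset.Icc 1 (n-1), (1 - (k : ℝ) / n) * Real.cos (k * t) := by
      refine (Finset.sum_subset ?_ ?_).symm
      · intro x hx; simp only [Finset.mem_Icc] at hx ⊢; omega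
      · intro x hx hx'
        simp only [Finset.mem_Icc] at hx hx'
        have hx2 : x = n := by omega
        rw [hx2]
        have : (1 - (n : ℝ) / n) = 0 := by field_simp; norm_num
        rw [this, zero_mul]
    rw [hsub]
    refine Finset.sum_nbij' (fun d => d.toNat) (fun k => (k:ℤ)) ?_ ?_ ?_ ?_ ?_
    · intro d hd; simp only [Finset.mem_Icc] at hd ⊢; omega
    · intro k hk; simp only [Finset.mem_Icc] at hk ⊢; omega
    · intro d hd; simp only [Finset.mem_Icc] at hd; omega
    · intro k hk; simp only [Finset.mem_Icc] at hk; omega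
    · intro d hd
      simp only [Finset.mem_Icc] at hd
      simp only [hg]
      have h1 : ((d.toNat : ℕ) : ℝ) = (d : ℝ) := by
        have : ((d.toNat : ℕ) : ℤ) = d := by omega
        exact_mod_cast congrArg (Int.cast : ℤ → ℝ) this
      have h2 : |(d:ℝ)| = (d:ℝ) := by
        rw [_root_.abs_of_nonneg]; exact_mod_cast (by omega : (0:ℤ) ≤ d)
      rw [h1, h2]
  rw [fejer, hsplit, Finset.sum_union hdisj]
  show (∑ d ∈ Finset.Icc (-(n:ℤ)+1) (-1), g d) + ∑ d ∈ Finset.Icc (0:ℤ) ((n:ℤ)-1), g d = _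
  rw [hneg, hzero, Finset.sum_insert (by simp), h0, hpos]
  ring

lemma gFun_hasDerivAt (n : ℕ) (hn : 1 ≤ n) (t : ℝ) :
    HasDerivAt (gFun n) (fejer n t / 2 - 1 / 2) t := by
  have hsum : HasDerivAt (gFun n)
      (∑ k ∈ Finset.Icc 1 n, (1 - (k:ℝ)/n) * Real.cos (k*t)) t := by
    have : HasDerivAt (fun t => ∑ k ∈ Finset.Icc 1 n,
        (1 - (k : ℝ) / n) * (1 / k) * Real.sin (k * t))
        (∑ k ∈ Finset.Icc 1 n, (1 - (k:ℝ)/n) * Real.cos (k*t)) t := by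
      refine HasDerivAt.fun_sum fun k hk => ?_
      simp only [Finset.mem_Icc] at hk
      have hk0 : (k:ℝ) ≠ 0 := by
        have : (0:ℕ) < k := hk.1
        positivity
      have h1 : HasDerivAt (fun t : ℝ => (k:ℝ) * t) ((k:ℝ)) t := by
        simpa using (hasDerivAt_id t).const_mul (k:ℝ)
      have h2 := (h1.sin).const_mul ((1 - (k : ℝ) / n) * (1 / k))
      convert h2 using 1
      · rfl
      have e : (1 / (k:ℝ)) * k = 1 := one_div_mul_cancel hk0
      linear_combination (-(1 - (k:ℝ)/n) * Real.cos (k*t)) * e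
    exact this
  have heq : (∑ k ∈ Finset.Icc 1 n, (1 - (k:ℝ)/n) * Real.cos (k*t))
      = fejer n t / 2 - 1 / 2 := by
    rw [fejer_split n hn t]; ring
  rw [← heq]
  exact hsum

lemma fejer_continuous (n : ℕ) : Continuous (fejer n) := by
  unfold fejer
  exact continuous_finset_sum _ fun i _ => by continuity

theorem gFun_deriv_and_variation (n : ℕ) (hn : 1 ≤ n) :
    (∀ t : ℝ, HasDerivAt (gFun n) (fejer n t / 2 - 1 / 2) t) ∧
    (∫ t in (0:ℝ)..(2 * Real.pi), |deriv (gFun n) t|) ≤ 2 * Real.pi := by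
  refine ⟨fun t => gFun_hasDerivAt n hn t, ?_⟩
  have hd : ∀ t : ℝ, deriv (gFun n) t = fejer n t / 2 - 1 / 2 :=
    fun t => (gFun_hasDerivAt n hn t).deriv
  have hcong : (∫ t in (0:ℝ)..(2 * Real.pi), |deriv (gFun n) t|)
      = ∫ t in (0:ℝ)..(2 * Real.pi), |fejer n t / 2 - 1 / 2| := by
    refine intervalIntegral.integral_congr fun t _ => ?_
    rw [hd t]
  rw [hcong]
  have hcont : Continuous fun t => |fejer n t / 2 - 1 / 2| :=
    (((fejer_continuous n).div_const 2).sub continuous_const).abs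
  have hcont2 : Continuous fun t => fejer n t / 2 + 1 / 2 :=
    ((fejer_continuous n).div_const 2).add continuous_const
  have hmono : (∫ t in (0:ℝ)..(2 * Real.pi), |fejer n t / 2 - 1 / 2|)
      ≤ ∫ t in (0:ℝ)..(2 * Real.pi), (fejer n t / 2 + 1 / 2) := by
    refine intervalIntegral.integral_mono_on (by positivity)
      (hcont.intervalIntegrable _ _) (hcont2.intervalIntegrable _ _) fun t ht => ?_
    have h0 := fejer_nonneg n hn t
    rw [abs_sub_le_iff]
    constructor <;> [linarith; linarith [abs_nonneg (fejer n t / 2 - 1 / 2)]]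
  have hval : (∫ t in (0:ℝ)..(2 * Real.pi), (fejer n t / 2 + 1 / 2)) = 2 * Real.pi := by
    rw [intervalIntegral.integral_add (((fejer_continuous n).div_const 2).intervalIntegrable _ _)
      (intervalIntegrable_const)]
    have h1 : (∫ t in (0:ℝ)..(2 * Real.pi), fejer n t / 2)
        = (∫ t in (0:ℝ)..(2 * Real.pi), fejer n t) / 2 := by
      simp [intervalIntegral.integral_div]
    rw [h1, fejer_integral n hn, intervalIntegral.integral_const]
    simp
    ring
  calc (∫ t in (0:ℝ)..(2 * Real.pi), |fejer n t / 2 - 1 / 2|)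
      ≤ ∫ t in (0:ℝ)..(2 * Real.pi), (fejer n t / 2 + 1 / 2) := hmono
    _ = 2 * Real.pi := hval
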